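/- Let (w_i)_{i≥1} be positive reals with Σ_{i=1}^∞ (w_i/s_i)² < ∞, where s_i = w_1+⋯+w_i. Let u_n and v_n be two independent weight-proportional random nodes of the n-node w-WRRT T_n (coupled consistently over n via the two-node coupling). Then the height |u_n ∧ v_n| of the last common ancestor u_n ∧ v_n of u_n and v_n converges in distribution, as n → ∞, to an almost surely finite random variable. -/

import Mathlib

open MeasureTheory ProbabilityTheory Finset Filter Topology
open scoped Classical

/-- `i` is a (non-strict) ancestor of `j` in the tree with parent map `p`. -/
def isAnc (p : ℕ → ℕ) (i j : ℕ) : Prop := ∃ k : ℕ, p^[k] j = i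

lemma wrrt_iter_bounds (p : ℕ → ℕ) (hp1 : p 1 = 1)
    (hp : ∀ m, 2 ≤ m → 1 ≤ p m ∧ p m ≤ m - 1) :
    ∀ k j, 1 ≤ j → 1 ≤ p^[k] j ∧ p^[k] j ≤ j := by
  intro k
  induction k with
  | zero => intro j hj; simpa using hj
  | succ k ih =>
    intro j hj
    rw [Function.iterate_succ_apply']
    obtain ⟨h1, h2⟩ := ih j hj
    rcases eq_or_lt_of_le h1 with h | h
    · rw [← h, hp1]; omega
    · obtain ⟨h3, h4⟩ := hp _ h
      omega

lemma wrrt_anc_le {p : ℕ → ℕ} (hp1 : p 1 = 1)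
    (hp : ∀ m, 2 ≤ m → 1 ≤ p m ∧ p m ≤ m - 1) {i j : ℕ} (hj : 1 ≤ j)
    (h : isAnc p i j) : 1 ≤ i ∧ i ≤ j := by
  obtain ⟨k, hk⟩ := h
  rw [← hk]
  exact wrrt_iter_bounds p hp1 hp k j hj

lemma wrrt_anc_succ (p : ℕ → ℕ) (i m : ℕ) :
    isAnc p i m ↔ i = m ∨ isAnc p i (p m) := by
  constructor
  · rintro ⟨k, hk⟩
    cases k with
    | zero => left; exact hk.symm
    | succ k => right; exact ⟨k, by rwa [Function.iterate_succ_apply] at hk⟩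
  · rintro (rfl | ⟨k, hk⟩)
    · exact ⟨0, rfl⟩
    · exact ⟨k + 1, by rw [Function.iterate_succ_apply]; exact hk⟩

/-- **Convergence in distribution of the height of the last common ancestor.**
In the two-node coupled construction of the `w`-WRRT with two independent weight-proportional
nodes `u_n, v_n`, if `∑ (w_i/s_i)² < ∞`, then the height `|u_n ∧ v_n|` of the last common
ancestor of `u_n` and `v_n` converges in distribution, as `n → ∞`, to an (almost surely
finite, i.e. `ℕ`-valued) random variable. -/
theorem lca_height_converges
    {Ω : Type*} [MeasurableSpace Ω] (μ : Measure Ω) [IsProbabilityMeasure μ]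
    (w : ℕ → ℝ) (hw : ∀ i, 1 ≤ i → 0 < w i)
    (s : ℕ → ℝ) (hs : ∀ i, s i = ∑ j ∈ Finset.Icc 1 i, w j)
    (hsum : Summable fun i => (w i / s i) ^ 2)
    (B B' : ℕ → Ω → Bool) (U : ℕ → Ω → ℕ)
    (f : ℕ ⊕ ℕ ⊕ ℕ → Ω → ℕ)
    (hfB : ∀ i, f (Sum.inl i) = fun ω => if B i ω then 1 else 0)
    (hfB' : ∀ i, f (Sum.inr (Sum.inl i)) = fun ω => if B' i ω then 1 else 0)
    (hfU : ∀ i, f (Sum.inr (Sum.inr i)) = U i)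
    (hmeas : ∀ j, Measurable (f j))
    (hindep : iIndepFun f μ)
    (hBlaw : ∀ i, 1 ≤ i → μ {ω | B i ω = true} = ENNReal.ofReal (w i / s i))
    (hB'law : ∀ i, 1 ≤ i → μ {ω | B' i ω = true} = ENNReal.ofReal (w i / s i))
    (hUlaw : ∀ m, 1 ≤ m → ∀ i, 1 ≤ i → i ≤ m →
      μ {ω | U m ω = i} = ENNReal.ofReal (w i / s m))
    (hUrange : ∀ m, 1 ≤ m → ∀ ω, 1 ≤ U m ω ∧ U m ω ≤ m)
    (par u v : ℕ → Ω → ℕ)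
    (hparmeas : ∀ m, Measurable (par m))
    (humeas : ∀ n, Measurable (u n)) (hvmeas : ∀ n, Measurable (v n))
    (hpar1 : ∀ ω, par 1 ω = 1)
    (hu1 : ∀ ω, u 1 ω = 1) (hv1 : ∀ ω, v 1 ω = 1)
    (hrec : ∀ ω, ∀ m, 2 ≤ m →
      (B m ω = false → B' m ω = false →
        par m ω = U (m - 1) ω ∧ u m ω = u (m - 1) ω ∧ v m ω = v (m - 1) ω) ∧
      (B m ω = true → B' m ω = false →
        par m ω = u (m - 1) ω ∧ u m ω = m ∧ v m ω = v (m - 1) ω) ∧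
      (B m ω = false → B' m ω = true →
        par m ω = v (m - 1) ω ∧ u m ω = u (m - 1) ω ∧ v m ω = m) ∧
      (B m ω = true → B' m ω = true →
        par m ω = u (m - 1) ω ∧ u m ω = m ∧ v m ω = m))
    -- the height of the last common ancestor of `u n` and `v n`:
    -- (number of common non-strict ancestors) minus one
    (H : ℕ → Ω → ℕ)
    (hH : ∀ n ω, H n ω =
      ((Finset.Icc 1 n).filter (fun i =>
          isAnc (fun m => par m ω) i (u n ω) ∧ isAnc (fun m => par m ω) i (v n ω))).card - 1) :
    ∃ θ : Ω → ℕ, Measurable θ ∧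
      ∀ k : ℕ, Tendsto (fun n => μ {ω | H n ω = k}) atTop (𝓝 (μ {ω | θ ω = k})) := by
  classical
  -- positivity of the partial sums
  have hspos : ∀ i, 1 ≤ i → 0 < s i := by
    intro i hi
    rw [hs]
    apply Finset.sum_pos
    · intro j hj; exact hw j (Finset.mem_Icc.mp hj).1
    · exact ⟨1, Finset.mem_Icc.mpr ⟨le_rfl, hi⟩⟩
  have hrnn : ∀ i, 1 ≤ i → 0 ≤ w i / s i := fun i hi =>
    div_nonneg (hw i hi).le (hspos i hi).le
  -- bounds on u and v
  have huv : ∀ n, 1 ≤ n → ∀ ω, (1 ≤ u n ω ∧ u n ω ≤ n) ∧ (1 ≤ v n ω ∧ v n ω ≤ n) := by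
    intro n hn
    induction n, hn using Nat.le_induction with
    | base => intro ω; simp [hu1, hv1]
    | succ n hn ih =>
      intro ω
      obtain ⟨h00, h10, h01, h11⟩ := hrec ω (n + 1) (by omega)
      have hsub : n + 1 - 1 = n := by omega
      rw [hsub] at h00 h10 h01 h11
      obtain ⟨⟨hu1', hu2'⟩, ⟨hv1', hv2'⟩⟩ := ih ω
      cases hB : B (n + 1) ω <;> cases hB' : B' (n + 1) ω
      · obtain ⟨-, h1, h2⟩ := h00 hB hB'; rw [h1, h2]; omega
      · obtain ⟨-, h1, h2⟩ := h01 hB hB'; rw [h1, h2]; omega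
      · obtain ⟨-, h1, h2⟩ := h10 hB hB'; rw [h1, h2]; omega
      · obtain ⟨-, h1, h2⟩ := h11 hB hB'; rw [h1, h2]; omega
  have hu' : ∀ n, 1 ≤ n → ∀ ω, 1 ≤ u n ω ∧ u n ω ≤ n := fun n hn ω => (huv n hn ω).1
  have hv' : ∀ n, 1 ≤ n → ∀ ω, 1 ≤ v n ω ∧ v n ω ≤ n := fun n hn ω => (huv n hn ω).2
  -- bounds on the parent map
  have hpb : ∀ ω m, 2 ≤ m → 1 ≤ par m ω ∧ par m ω ≤ m - 1 := by
    intro ω m hm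
    obtain ⟨h00, h10, h01, h11⟩ := hrec ω m hm
    have hm1 : 1 ≤ m - 1 := by omega
    cases hB : B m ω <;> cases hB' : B' m ω
    · obtain ⟨h1, -, -⟩ := h00 hB hB'; rw [h1]; exact hUrange (m - 1) hm1 ω
    · obtain ⟨h1, -, -⟩ := h01 hB hB'; rw [h1]; exact hv' (m - 1) hm1 ω
    · obtain ⟨h1, -, -⟩ := h10 hB hB'; rw [h1]; exact hu' (m - 1) hm1 ω
    · obtain ⟨h1, -, -⟩ := h11 hB hB'; rw [h1]; exact hu' (m - 1) hm1 ω
  have hancle : ∀ ω (i j : ℕ), 1 ≤ j → isAnc (fun m => par m ω) i j → 1 ≤ i ∧ i ≤ j :=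
    fun ω i j hj h => wrrt_anc_le (hpar1 ω) (hpb ω) hj h
  -- the set of common ancestors doesn't change at a step without a double success
  have hsets : ∀ ω m, 2 ≤ m → ¬(B m ω = true ∧ B' m ω = true) →
      ((Finset.Icc 1 m).filter (fun i =>
          isAnc (fun j => par j ω) i (u m ω) ∧ isAnc (fun j => par j ω) i (v m ω))) =
      ((Finset.Icc 1 (m - 1)).filter (fun i =>
          isAnc (fun j => par j ω) i (u (m - 1) ω) ∧
          isAnc (fun j => par j ω) i (v (m - 1) ω))) := by
    intro ω m hm hno
    have hm1 : 1 ≤ m - 1 := by omega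
    obtain ⟨h00, h10, h01, h11⟩ := hrec ω m hm
    cases hB : B m ω <;> cases hB' : B' m ω
    · -- both false
      obtain ⟨-, hum, hvm⟩ := h00 hB hB'
      ext i
      simp only [Finset.mem_filter, Finset.mem_Icc, hum, hvm]
      constructor
      · rintro ⟨⟨hi1, hi2⟩, ha, hb⟩
        have := hancle ω i (u (m - 1) ω) (hu' (m - 1) hm1 ω).1 ha
        have := (hu' (m - 1) hm1 ω).2
        exact ⟨⟨hi1, by omega⟩, ha, hb⟩
      · rintro ⟨⟨hi1, hi2⟩, ha, hb⟩
        exact ⟨⟨hi1, by omega⟩, ha, hb⟩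
    · -- B false, B' true
      obtain ⟨hpm, hum, hvm⟩ := h01 hB hB'
      ext i
      simp only [Finset.mem_filter, Finset.mem_Icc, hum, hvm]
      constructor
      · rintro ⟨⟨hi1, hi2⟩, ha, hb⟩
        have hle := hancle ω i (u (m - 1) ω) (hu' (m - 1) hm1 ω).1 ha
        have hub := (hu' (m - 1) hm1 ω).2
        rcases (wrrt_anc_succ (fun j => par j ω) i m).mp hb with h | h
        · omega
        · refine ⟨⟨hi1, by omega⟩, ha, ?_⟩
          have h' : isAnc (fun j => par j ω) i (par m ω) := h
          rwa [hpm] at h'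
      · rintro ⟨⟨hi1, hi2⟩, ha, hb⟩
        refine ⟨⟨hi1, by omega⟩, ha, ?_⟩
        refine (wrrt_anc_succ (fun j => par j ω) i m).mpr (Or.inr ?_)
        show isAnc (fun j => par j ω) i (par m ω)
        rw [hpm]; exact hb
    · -- B true, B' false
      obtain ⟨hpm, hum, hvm⟩ := h10 hB hB'
      ext i
      simp only [Finset.mem_filter, Finset.mem_Icc, hum, hvm]
      constructor
      · rintro ⟨⟨hi1, hi2⟩, ha, hb⟩
        have hle := hancle ω i (v (m - 1) ω) (hv' (m - 1) hm1 ω).1 hb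
        have hvb := (hv' (m - 1) hm1 ω).2
        rcases (wrrt_anc_succ (fun j => par j ω) i m).mp ha with h | h
        · omega
        · refine ⟨⟨hi1, by omega⟩, ?_, hb⟩
          have h' : isAnc (fun j => par j ω) i (par m ω) := h
          rwa [hpm] at h'
      · rintro ⟨⟨hi1, hi2⟩, ha, hb⟩
        refine ⟨⟨hi1, by omega⟩, ?_, hb⟩
        refine (wrrt_anc_succ (fun j => par j ω) i m).mpr (Or.inr ?_)
        show isAnc (fun j => par j ω) i (par m ω)
        rw [hpm]; exact ha
    · exact absurd ⟨hB, hB'⟩ hno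
  have hstep : ∀ ω m, 2 ≤ m → ¬(B m ω = true ∧ B' m ω = true) → H m ω = H (m - 1) ω := by
    intro ω m hm hno
    rw [hH m ω, hH (m - 1) ω, hsets ω m hm hno]
  have hconst : ∀ ω N, 1 ≤ N → (∀ m, N < m → ¬(B m ω = true ∧ B' m ω = true)) →
      ∀ n, N ≤ n → H n ω = H N ω := by
    intro ω N hN hno n hn
    induction n, hn using Nat.le_induction with
    | base => rfl
    | succ n hn ih =>
      have h := hstep ω (n + 1) (by omega) (hno (n + 1) (by omega))
      rw [show n + 1 - 1 = n from by omega] at h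
      rw [h, ih]
  -- measurability of H n
  have hiter : ∀ (k j : ℕ), Measurable (fun ω => (fun m => par m ω)^[k] j) := by
    intro k
    induction k with
    | zero => intro j; exact measurable_const
    | succ k ih =>
      intro j
      have he : (fun ω => (fun m => par m ω)^[k + 1] j) =
          fun ω => par ((fun m => par m ω)^[k] j) ω := by
        funext ω; rw [Function.iterate_succ_apply']
      rw [he]
      exact (measurable_from_prod_countable_left (f := fun q : Ω × ℕ => par q.2 q.1)
        (fun m => hparmeas m)).comp (measurable_id.prodMk (ih j))
  have hanc : ∀ (i : ℕ) (g : Ω → ℕ), Measurable g →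
      MeasurableSet {ω | isAnc (fun m => par m ω) i (g ω)} := by
    intro i g hg
    have he : {ω | isAnc (fun m => par m ω) i (g ω)} =
        ⋃ k, ⋃ j, ({ω | g ω = j} ∩ {ω | (fun m => par m ω)^[k] j = i}) := by
      ext ω
      simp only [Set.mem_setOf_eq, Set.mem_iUnion, Set.mem_inter_iff, isAnc]
      constructor
      · rintro ⟨k, hk⟩; exact ⟨k, g ω, rfl, hk⟩
      · rintro ⟨k, j, hj, hk⟩; exact ⟨k, by rw [hj]; exact hk⟩
    rw [he]
    exact MeasurableSet.iUnion fun k => MeasurableSet.iUnion fun j =>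
      (hg (measurableSet_singleton j)).inter ((hiter k j) (measurableSet_singleton i))
  have hHmeas : ∀ n, Measurable (H n) := by
    intro n
    have he : H n = fun ω =>
        (∑ i ∈ Finset.Icc 1 n, if (isAnc (fun m => par m ω) i (u n ω) ∧
          isAnc (fun m => par m ω) i (v n ω)) then 1 else 0) - 1 := by
      funext ω; rw [hH n ω, Finset.card_filter]
    rw [he]
    apply Measurable.sub_const
    apply Finset.measurable_sum
    intro i _
    refine Measurable.ite ?_ measurable_const measurable_const
    exact (hanc i (u n) (humeas n)).inter (hanc i (v n) (hvmeas n))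
  -- Borel-Cantelli for double successes
  set C : ℕ → Set Ω := fun i => {ω | B i ω = true ∧ B' i ω = true} with hCdef
  have hBset : ∀ i, {ω | B i ω = true} = f (Sum.inl i) ⁻¹' {1} := by
    intro i
    ext ω
    simp only [Set.mem_setOf_eq, Set.mem_preimage, hfB i, Set.mem_singleton_iff]
    cases B i ω <;> simp
  have hB'set : ∀ i, {ω | B' i ω = true} = f (Sum.inr (Sum.inl i)) ⁻¹' {1} := by
    intro i
    ext ω
    simp only [Set.mem_setOf_eq, Set.mem_preimage, hfB' i, Set.mem_singleton_iff]
    cases B' i ω <;> simp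
  have hCeq : ∀ i, C i = f (Sum.inl i) ⁻¹' {1} ∩ f (Sum.inr (Sum.inl i)) ⁻¹' {1} := by
    intro i
    rw [hCdef, ← hBset, ← hB'set]
    rfl
  have hCle : ∀ i, 1 ≤ i → μ (C i) = ENNReal.ofReal ((w i / s i) ^ 2) := by
    intro i hi
    rw [hCeq]
    have hind := hindep.indepFun
      (i := (Sum.inl i : ℕ ⊕ ℕ ⊕ ℕ)) (j := Sum.inr (Sum.inl i)) (by simp)
    rw [hind.measure_inter_preimage_eq_mul {1} {1} (measurableSet_singleton 1)
      (measurableSet_singleton 1), ← hBset, ← hB'set, hBlaw i hi, hB'law i hi,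
      ← ENNReal.ofReal_mul (hrnn i hi), sq]
  have htsum : ∑' i, μ (C i) ≠ ⊤ := by
    rw [tsum_eq_zero_add' ENNReal.summable]
    have h1 : ∑' i, μ (C (i + 1)) ≤ ∑' i, ENNReal.ofReal ((w (i + 1) / s (i + 1)) ^ 2) :=
      ENNReal.tsum_le_tsum fun i => le_of_eq (hCle (i + 1) (by omega))
    have h2 : ∑' i, ENNReal.ofReal ((w (i + 1) / s (i + 1)) ^ 2) ≠ ⊤ := by
      rw [← ENNReal.ofReal_tsum_of_nonneg (fun i => sq_nonneg _)
        ((summable_nat_add_iff 1).mpr hsum)]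
      exact ENNReal.ofReal_ne_top
    exact ENNReal.add_ne_top.mpr
      ⟨measure_ne_top μ _, (lt_of_le_of_lt h1 (lt_top_iff_ne_top.mpr h2)).ne⟩
  have hBC : μ (Filter.limsup C atTop) = 0 := measure_limsup_atTop_eq_zero htsum
  have hae : ∀ᵐ ω ∂μ, ∀ᶠ m in atTop, ω ∉ C m := by
    filter_upwards [measure_eq_zero_iff_ae_notMem.mp hBC] with ω hω
    rw [mem_limsup_iff_frequently_mem, Filter.not_frequently] at hω
    exact hω
  -- conclusion
  refine ⟨fun ω => Filter.liminf (fun n => H n ω) atTop, Measurable.liminf hHmeas, ?_⟩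
  intro k
  have haeconv : ∀ᵐ ω ∂μ, ∀ᶠ n in atTop,
      (ω ∈ {ω' | H n ω' = k} ↔
        ω ∈ {ω' | Filter.liminf (fun n => H n ω') atTop = k}) := by
    filter_upwards [hae] with ω hω
    obtain ⟨N, hN⟩ := Filter.eventually_atTop.mp hω
    set N' := max N 1 with hN'def
    have hno : ∀ m, N' < m → ¬(B m ω = true ∧ B' m ω = true) := by
      intro m hm hmem
      exact hN m (by omega) hmem
    have hev : ∀ᶠ n in atTop, H n ω = H N' ω :=
      Filter.eventually_atTop.mpr
        ⟨N', fun n hn => hconst ω N' (le_max_right N 1) hno n hn⟩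
    have hlim : Filter.liminf (fun n => H n ω) atTop = H N' ω := by
      rw [Filter.liminf_congr hev]
      exact Filter.liminf_const _
    filter_upwards [hev] with n hn
    simp only [Set.mem_setOf_eq, hn, hlim]
  exact tendsto_measure_of_ae_tendsto_indicator_of_isFiniteMeasure (μ := μ) atTop
    ((Measurable.liminf hHmeas) (measurableSet_singleton k))
    (fun n => (hHmeas n) (measurableSet_singleton k)) haeconv
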